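/- Let P be an r-differential poset. Then its rank sizes strictly increase from rank 1 onward: p_1 < p_2 < p_3 < ⋯, i.e., p_{n−1} < p_n for every n ≥ 2. (This resolves Stanley's conjecture.) -/

import Mathlib

open Finset

set_option linter.unusedSectionVars false
set_option linter.unreachableTactic false
set_option linter.unusedTactic false
set_option maxHeartbeats 1000000
attribute [local instance] Classical.propDecidable

namespace StanleyMiller

variable {α : Type*} [PartialOrder α] [OrderBot α]
variable (rk : α → ℕ) (r : ℕ) [∀ n : ℕ, Fintype {x : α // rk x = n}]

abbrev Pt (k : ℕ) := {x : α // rk x = k}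

abbrev V (k : ℕ) := Pt rk k → ℚ

noncomputable def Uo (k : ℕ) (f : V rk k) : V rk (k+1) :=
  fun a => ∑ x : Pt rk k, if (x:α) ⋖ (a:α) then f x else 0

noncomputable def Do (k : ℕ) (f : V rk (k+1)) : V rk k :=
  fun x => ∑ a : Pt rk (k+1), if (x:α) ⋖ (a:α) then f a else 0

noncomputable def inn (k : ℕ) (f g : V rk k) : ℚ := ∑ x : Pt rk k, f x * g x

def one (k : ℕ) : V rk k := fun _ => 1

noncomputable def pc (k : ℕ) : ℚ := (Fintype.card (Pt rk k) : ℚ)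

section Counting
variable (hr : 1 ≤ r) (hbot : rk (⊥:α) = 0)
  (hgrade : ∀ x y : α, x ⋖ y → rk y = rk x + 1)
  (hdown : ∀ x : α, x ≠ ⊥ → ∃ y : α, y ⋖ x)
  (hD1 : ∀ x : α, {z : α | x ⋖ z}.ncard = {y : α | y ⋖ x}.ncard + r)
  (hD2 : ∀ x y : α, x ≠ y →
      {z : α | z ⋖ x ∧ z ⋖ y}.ncard = {z : α | x ⋖ z ∧ y ⋖ z}.ncard)

include hgrade

lemma bridge (m : ℕ) (s : Set α) (hs : ∀ z ∈ s, rk z = m) :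
    s.ncard = (Finset.univ.filter (fun a : Pt rk m => (a:α) ∈ s)).card := by
  classical
  have him : s = ↑((Finset.univ.filter (fun a : Pt rk m => (a:α) ∈ s)).image (Subtype.val)) := by
    ext z
    simp only [Finset.coe_image, Set.mem_image, Finset.mem_coe, Finset.mem_filter,
      Finset.mem_univ, true_and]
    constructor
    · intro hz; exact ⟨⟨z, hs z hz⟩, hz, rfl⟩
    · rintro ⟨a, ha, rfl⟩; exact ha
  conv_lhs => rw [him]
  rw [Set.ncard_coe_finset, Finset.card_image_of_injective _ Subtype.val_injective]

-- number of upper covers of x ∈ P k, as a card of a finset of P (k+1)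
lemma card_up (k : ℕ) (x : Pt rk k) :
    ((Finset.univ.filter (fun a : Pt rk (k+1) => (x:α) ⋖ (a:α))).card)
      = {z : α | (x:α) ⋖ z}.ncard := by
  rw [bridge rk hgrade (k+1) {z : α | (x:α) ⋖ z}
      (fun z hz => by rw [hgrade _ _ hz, x.2])]
  first | rfl | (congr 1; ext a; simp [Set.mem_setOf_eq])

lemma card_dn (k : ℕ) (y : Pt rk (k+1)) :
    ((Finset.univ.filter (fun w : Pt rk k => (w:α) ⋖ (y:α))).card)
      = {z : α | z ⋖ (y:α)}.ncard := by
  rw [bridge rk hgrade k {z : α | z ⋖ (y:α)}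
      (fun z hz => by have := hgrade _ _ hz; rw [y.2] at this; omega)]
  first | rfl | (congr 1; ext a; simp [Set.mem_setOf_eq])

lemma card_cup (k : ℕ) (y z : Pt rk (k+1)) :
    ((Finset.univ.filter (fun a : Pt rk (k+2) => (y:α) ⋖ (a:α) ∧ (z:α) ⋖ (a:α))).card)
      = {a : α | (y:α) ⋖ a ∧ (z:α) ⋖ a}.ncard := by
  rw [bridge rk hgrade (k+2) _ (fun a ha => by rw [hgrade _ _ ha.1, y.2])]
  first | rfl | (congr 1; ext a; simp [Set.mem_setOf_eq])

lemma card_cdn (k : ℕ) (y z : Pt rk (k+1)) :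
    ((Finset.univ.filter (fun w : Pt rk k => (w:α) ⋖ (y:α) ∧ (w:α) ⋖ (z:α))).card)
      = {a : α | a ⋖ (y:α) ∧ a ⋖ (z:α)}.ncard := by
  rw [bridge rk hgrade k _
      (fun a ha => by have := hgrade _ _ ha.1; rw [y.2] at this; omega)]
  first | rfl | (congr 1; ext a; simp [Set.mem_setOf_eq])

include hD1 in
lemma card_up_dn (k : ℕ) (y : Pt rk (k+1)) :
    ((Finset.univ.filter (fun a : Pt rk (k+2) => (y:α) ⋖ (a:α))).card)
      = ((Finset.univ.filter (fun w : Pt rk k => (w:α) ⋖ (y:α))).card) + r := by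
  rw [card_up rk hgrade, card_dn rk hgrade, hD1]

include hbot hdown hD1 in
lemma rk_zero_iff (x : α) : rk x = 0 ↔ x = ⊥ := by
  constructor
  · intro h
    by_contra hne
    obtain ⟨y, hy⟩ := hdown x hne
    have := hgrade _ _ hy
    omega
  · rintro rfl; exact hbot

include hD2 in
lemma card_common (k : ℕ) (y z : Pt rk (k+1)) (hyz : y ≠ z) :
    ((Finset.univ.filter (fun a : Pt rk (k+2) => (y:α) ⋖ (a:α) ∧ (z:α) ⋖ (a:α))).card)
      = ((Finset.univ.filter (fun w : Pt rk k => (w:α) ⋖ (y:α) ∧ (w:α) ⋖ (z:α))).card) := by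
  have hne : (y:α) ≠ (z:α) := fun h => hyz (Subtype.val_injective h)
  rw [card_cup rk hgrade, card_cdn rk hgrade, ← hD2 _ _ hne]

include hbot hdown in
lemma rk_zero_unique (x : α) (hx : rk x = 0) : x = ⊥ := by
  by_contra hne
  obtain ⟨y, hy⟩ := hdown x hne
  have := hgrade _ _ hy
  omega

include hbot hdown in
lemma pc_zero : pc rk 0 = 1 := by
  have : Fintype.card (Pt rk 0) = 1 := by
    rw [Fintype.card_eq_one_iff]
    exact ⟨⟨⊥, hbot⟩, fun b => Subtype.ext (rk_zero_unique rk hbot hgrade hdown _ b.2)⟩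
  simp [pc, this]

include hbot hdown hD1 in
lemma bot_covers (a : Pt rk 1) : (⊥:α) ⋖ (a:α) := by
  have hne : (a:α) ≠ ⊥ := by
    intro h
    have := a.2
    rw [h, hbot] at this
    omega
  obtain ⟨y, hy⟩ := hdown _ hne
  have hrk := hgrade _ _ hy
  rw [a.2] at hrk
  have : y = ⊥ := rk_zero_unique rk hbot hgrade hdown y (by omega)
  rwa [this] at hy

include hbot hdown hD1 in
lemma pc_one : pc rk 1 = r := by
  have h1 : {y : α | y ⋖ (⊥:α)}.ncard = 0 := by
    have : {y : α | y ⋖ (⊥:α)} = ∅ := by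
      ext y; simp only [Set.mem_setOf_eq, Set.mem_empty_iff_false, iff_false]
      intro h; exact absurd h.lt (not_lt_bot)
    simp [this]
  have h2 := hD1 (⊥:α)
  rw [h1] at h2
  have h3 : ((Finset.univ.filter (fun a : Pt rk 1 => (⊥:α) ⋖ (a:α))).card) = r := by
    have hb : (⊥:α) = ((⟨⊥, hbot⟩ : Pt rk 0) : α) := rfl
    rw [hb, card_up rk hgrade 0 ⟨⊥, hbot⟩]
    simpa using h2
  have h4 : (Finset.univ.filter (fun a : Pt rk 1 => (⊥:α) ⋖ (a:α))) = Finset.univ := by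
    apply Finset.filter_true_of_mem
    intro a _
    exact bot_covers rk r hbot hgrade hdown hD1 a
  rw [h4] at h3
  simp [pc, ← h3]

include hr hbot hdown hD1 in
lemma pt_nonempty (k : ℕ) : Nonempty (Pt rk k) := by
  induction k with
  | zero => exact ⟨⟨⊥, hbot⟩⟩
  | succ k ih =>
    obtain ⟨x⟩ := ih
    have hcard : ((Finset.univ.filter (fun a : Pt rk (k+1) => (x:α) ⋖ (a:α))).card)
        = {z : α | (x:α) ⋖ z}.ncard := card_up rk hgrade k x
    have hpos : 0 < {z : α | (x:α) ⋖ z}.ncard := by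
      rw [hD1 (x:α)]; omega
    rw [← hcard] at hpos
    obtain ⟨a, _⟩ := Finset.card_pos.mp hpos
    exact ⟨a⟩

include hD1 hD2 in
lemma comm (k : ℕ) (f : V rk (k+1)) :
    Do rk (k+1) (Uo rk (k+1) f) = Uo rk k (Do rk k f) + (r:ℚ) • f := by
  funext y
  have expandL : (Do rk (k+1) (Uo rk (k+1) f)) y
      = ∑ z : Pt rk (k+1), f z *
        (((Finset.univ.filter
          (fun a : Pt rk (k+2) => (y:α) ⋖ (a:α) ∧ (z:α) ⋖ (a:α))).card : ℚ)) := by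
    unfold Do Uo
    have h1 : ∀ a : Pt rk (k+2),
        (if (y:α) ⋖ (a:α) then (∑ z : Pt rk (k+1), if (z:α) ⋖ (a:α) then f z else 0) else 0)
          = ∑ z : Pt rk (k+1), if ((y:α) ⋖ (a:α) ∧ (z:α) ⋖ (a:α)) then f z else 0 := by
      intro a
      split_ifs with h
      · exact Finset.sum_congr rfl (fun z _ => by simp [h])
      · symm; apply Finset.sum_eq_zero; intro z _; simp [h]
    rw [Finset.sum_congr rfl (fun a _ => h1 a), Finset.sum_comm]
    refine Finset.sum_congr rfl (fun z _ => ?_)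
    rw [← Finset.sum_boole, Finset.mul_sum]
    exact Finset.sum_congr rfl (fun a _ => by split_ifs <;> ring)
  have expandR : (Uo rk k (Do rk k f)) y
      = ∑ z : Pt rk (k+1), f z *
        (((Finset.univ.filter
          (fun w : Pt rk k => (w:α) ⋖ (y:α) ∧ (w:α) ⋖ (z:α))).card : ℚ)) := by
    unfold Do Uo
    have h1 : ∀ w : Pt rk k,
        (if (w:α) ⋖ (y:α) then (∑ z : Pt rk (k+1), if (w:α) ⋖ (z:α) then f z else 0) else 0)
          = ∑ z : Pt rk (k+1), if ((w:α) ⋖ (y:α) ∧ (w:α) ⋖ (z:α)) then f z else 0 := by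
      intro w
      split_ifs with h
      · exact Finset.sum_congr rfl (fun z _ => by simp [h])
      · symm; apply Finset.sum_eq_zero; intro z _; simp [h]
    rw [Finset.sum_congr rfl (fun w _ => h1 w), Finset.sum_comm]
    refine Finset.sum_congr rfl (fun z _ => ?_)
    rw [← Finset.sum_boole, Finset.mul_sum]
    exact Finset.sum_congr rfl (fun w _ => by split_ifs <;> ring)
  have key : ∀ z : Pt rk (k+1),
      (((Finset.univ.filter
          (fun a : Pt rk (k+2) => (y:α) ⋖ (a:α) ∧ (z:α) ⋖ (a:α))).card : ℚ))
        = (((Finset.univ.filter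
          (fun w : Pt rk k => (w:α) ⋖ (y:α) ∧ (w:α) ⋖ (z:α))).card : ℚ))
          + (if z = y then (r:ℚ) else 0) := by
    intro z
    by_cases hzy : z = y
    · subst hzy
      simp only [if_pos rfl, and_self]
      have := card_up_dn rk r hgrade hD1 k z
      rw [this]
      push_cast
      ring
    · rw [if_neg hzy, add_zero]
      have := card_common rk hgrade hD2 k y z (fun h => hzy h.symm)
      rw [this]
  rw [expandL, Pi.add_apply, expandR, Pi.smul_apply, smul_eq_mul]
  rw [Finset.sum_congr rfl (fun z _ => by rw [key z])]
  rw [Finset.sum_congr rfl (fun z (_ : z ∈ Finset.univ) => mul_add (f z) _ _),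
    Finset.sum_add_distrib]
  congr 1
  have : ∀ z : Pt rk (k+1), f z * (if z = y then (r:ℚ) else 0)
      = if z = y then f z * r else 0 := fun z => by split_ifs <;> ring
  rw [Finset.sum_congr rfl (fun z _ => this z), Finset.sum_ite_eq' Finset.univ y
    (fun z => f z * r), if_pos (Finset.mem_univ y)]
  ring

include hbot hdown hD1 in
lemma comm0 (f : V rk 0) : Do rk 0 (Uo rk 0 f) = (r:ℚ) • f := by
  funext x
  have hx : x = ⟨⊥, hbot⟩ := Subtype.ext (rk_zero_unique rk hbot hgrade hdown _ x.2)
  subst hx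
  unfold Do Uo
  have h1 : ∀ a : Pt rk 1,
      (if ((⟨⊥, hbot⟩ : Pt rk 0):α) ⋖ (a:α) then
        (∑ z : Pt rk 0, if (z:α) ⋖ (a:α) then f z else 0) else 0)
      = if ((⟨⊥, hbot⟩ : Pt rk 0):α) ⋖ (a:α) then f ⟨⊥, hbot⟩ else 0 := by
    intro a
    split_ifs with h
    · rw [Fintype.sum_eq_single (⟨⊥, hbot⟩ : Pt rk 0)
        (fun b hb => by
          exact absurd (Subtype.ext (rk_zero_unique rk hbot hgrade hdown _ b.2)) hb)]
      rw [if_pos h]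
    · rfl
  rw [Finset.sum_congr rfl (fun a _ => h1 a)]
  have h2 : ∀ a : Pt rk 1, ((⟨⊥, hbot⟩ : Pt rk 0):α) ⋖ (a:α) :=
    fun a => bot_covers rk r hbot hgrade hdown hD1 a
  rw [Finset.sum_congr rfl (fun a _ => if_pos (h2 a))]
  simp only [Finset.sum_const, Finset.card_univ, nsmul_eq_mul, Pi.smul_apply, smul_eq_mul]
  have : (Fintype.card (Pt rk 1) : ℚ) = r := by
    have := pc_one rk r hbot hgrade hdown hD1
    simpa [pc] using this
  rw [this]

end Counting

section Ops

lemma ite_mul_boole {c : Prop} [Decidable c] (v w : ℚ) :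
    (if c then v * w else 0) = v * (if c then w else 0) := by
  split_ifs <;> ring

lemma Uo_smul (k : ℕ) (c : ℚ) (f : V rk k) : Uo rk k (c • f) = c • Uo rk k f := by
  funext a
  simp only [Uo, Pi.smul_apply, smul_eq_mul, Finset.mul_sum]
  exact Finset.sum_congr rfl (fun x _ => by split_ifs <;> ring)

lemma Uo_add (k : ℕ) (f g : V rk k) : Uo rk k (f + g) = Uo rk k f + Uo rk k g := by
  funext a
  simp only [Uo, Pi.add_apply, ← Finset.sum_add_distrib]
  exact Finset.sum_congr rfl (fun x _ => by split_ifs <;> ring)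

lemma Uo_sub (k : ℕ) (f g : V rk k) : Uo rk k (f - g) = Uo rk k f - Uo rk k g := by
  funext a
  simp only [Uo, Pi.sub_apply, ← Finset.sum_sub_distrib]
  exact Finset.sum_congr rfl (fun x _ => by split_ifs <;> ring)

lemma Do_smul (k : ℕ) (c : ℚ) (f : V rk (k+1)) : Do rk k (c • f) = c • Do rk k f := by
  funext x
  simp only [Do, Pi.smul_apply, smul_eq_mul, Finset.mul_sum]
  exact Finset.sum_congr rfl (fun a _ => by split_ifs <;> ring)

lemma Do_add (k : ℕ) (f g : V rk (k+1)) : Do rk k (f + g) = Do rk k f + Do rk k g := by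
  funext x
  simp only [Do, Pi.add_apply, ← Finset.sum_add_distrib]
  exact Finset.sum_congr rfl (fun a _ => by split_ifs <;> ring)

lemma Do_sub (k : ℕ) (f g : V rk (k+1)) : Do rk k (f - g) = Do rk k f - Do rk k g := by
  funext x
  simp only [Do, Pi.sub_apply, ← Finset.sum_sub_distrib]
  exact Finset.sum_congr rfl (fun a _ => by split_ifs <;> ring)

lemma inn_symm (k : ℕ) (f g : V rk k) : inn rk k f g = inn rk k g f := by
  unfold inn; exact Finset.sum_congr rfl (fun x _ => mul_comm _ _)

lemma inn_add_left (k : ℕ) (f g h : V rk k) :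
    inn rk k (f + g) h = inn rk k f h + inn rk k g h := by
  unfold inn
  rw [← Finset.sum_add_distrib]
  exact Finset.sum_congr rfl (fun x _ => by simp [Pi.add_apply]; ring)

lemma inn_smul_left (k : ℕ) (c : ℚ) (f h : V rk k) :
    inn rk k (c • f) h = c * inn rk k f h := by
  unfold inn
  rw [Finset.mul_sum]
  exact Finset.sum_congr rfl (fun x _ => by simp [Pi.smul_apply]; ring)

lemma inn_sub_left (k : ℕ) (f g h : V rk k) :
    inn rk k (f - g) h = inn rk k f h - inn rk k g h := by
  unfold inn
  rw [← Finset.sum_sub_distrib]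
  exact Finset.sum_congr rfl (fun x _ => by simp [Pi.sub_apply]; ring)

lemma inn_add_right (k : ℕ) (f g h : V rk k) :
    inn rk k f (g + h) = inn rk k f g + inn rk k f h := by
  rw [inn_symm, inn_add_left, inn_symm rk k g f, inn_symm rk k h f]

lemma inn_smul_right (k : ℕ) (c : ℚ) (f h : V rk k) :
    inn rk k f (c • h) = c * inn rk k f h := by
  rw [inn_symm, inn_smul_left, inn_symm]

lemma inn_self_nonneg (k : ℕ) (f : V rk k) : 0 ≤ inn rk k f f :=
  Finset.sum_nonneg (fun x _ => mul_self_nonneg _)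

lemma inn_one_one (k : ℕ) : inn rk k (one rk k) (one rk k) = pc rk k := by
  simp [inn, one, pc]

lemma adj (k : ℕ) (f : V rk k) (h : V rk (k+1)) :
    inn rk (k+1) (Uo rk k f) h = inn rk k f (Do rk k h) := by
  unfold inn Uo Do
  have lhs : ∀ a : Pt rk (k+1),
      (∑ x : Pt rk k, if (x:α) ⋖ (a:α) then f x else 0) * h a
        = ∑ x : Pt rk k, if (x:α) ⋖ (a:α) then f x * h a else 0 := by
    intro a
    rw [Finset.sum_mul]
    exact Finset.sum_congr rfl (fun x _ => by split_ifs <;> ring)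
  have rhs : ∀ x : Pt rk k,
      f x * (∑ a : Pt rk (k+1), if (x:α) ⋖ (a:α) then h a else 0)
        = ∑ a : Pt rk (k+1), if (x:α) ⋖ (a:α) then f x * h a else 0 := by
    intro x
    rw [Finset.mul_sum]
    exact Finset.sum_congr rfl (fun a _ => by split_ifs <;> ring)
  simp only [lhs, rhs]
  exact Finset.sum_comm

end Ops

noncomputable def gvec : (k : ℕ) → V rk k
  | 0 => (r:ℚ) • one rk 0
  | (k+1) => Uo rk k (one rk k) + (r:ℚ) • one rk (k+1)

lemma gvec_zero : gvec rk r 0 = (r:ℚ) • one rk 0 := rfl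
lemma gvec_succ (k : ℕ) : gvec rk r (k+1) = Uo rk k (one rk k) + (r:ℚ) • one rk (k+1) := rfl

noncomputable def xb : (k : ℕ) → ℕ → (V rk k) × (V rk k)
  | 0, j => ⟨(((j:ℚ)+1) * (r:ℚ))⁻¹ • one rk 0,
             (r:ℚ) • ((((j:ℚ)+1) * (r:ℚ))⁻¹ • one rk 0)⟩
  | (k+1), j =>
      ⟨(((j:ℚ)+1) * (r:ℚ))⁻¹ • (one rk (k+1) - Uo rk k (xb k (j+1)).2),
       Uo rk k (xb k (j+1)).1 +
         (r:ℚ) • ((((j:ℚ)+1) * (r:ℚ))⁻¹ • (one rk (k+1) - Uo rk k (xb k (j+1)).2))⟩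

noncomputable abbrev xiV (k j : ℕ) : V rk k := (xb rk r k j).1
noncomputable abbrev betaV (k j : ℕ) : V rk k := (xb rk r k j).2

lemma xi_zero (j : ℕ) : xiV rk r 0 j = (((j:ℚ)+1) * (r:ℚ))⁻¹ • one rk 0 := rfl
lemma beta_zero (j : ℕ) : betaV rk r 0 j = (r:ℚ) • xiV rk r 0 j := rfl
lemma xi_succ (k j : ℕ) : xiV rk r (k+1) j
    = (((j:ℚ)+1) * (r:ℚ))⁻¹ • (one rk (k+1) - Uo rk k (betaV rk r k (j+1))) := rfl
lemma beta_succ (k j : ℕ) : betaV rk r (k+1) j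
    = Uo rk k (xiV rk r k (j+1)) + (r:ℚ) • xiV rk r (k+1) j := rfl

section Identities
variable (hr : 1 ≤ r) (hbot : rk (⊥:α) = 0)
  (hgrade : ∀ x y : α, x ⋖ y → rk y = rk x + 1)
  (hdown : ∀ x : α, x ≠ ⊥ → ∃ y : α, y ⋖ x)
  (hD1 : ∀ x : α, {z : α | x ⋖ z}.ncard = {y : α | y ⋖ x}.ncard + r)
  (hD2 : ∀ x y : α, x ≠ y →
      {z : α | z ⋖ x ∧ z ⋖ y}.ncard = {z : α | x ⋖ z ∧ y ⋖ z}.ncard)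

include hr

lemma rq_ne : (r:ℚ) ≠ 0 := by
  have : (1:ℚ) ≤ (r:ℚ) := by exact_mod_cast hr
  linarith

lemma jq_ne (j : ℕ) : ((j:ℚ)+1) ≠ 0 := by positivity

include hbot hgrade hdown hD1 in
lemma down_one : ∀ k, Do rk k (one rk (k+1)) = gvec rk r k := by
  intro k
  match k with
  | 0 =>
    funext x
    have hx : x = ⟨⊥, hbot⟩ := Subtype.ext (rk_zero_unique rk hbot hgrade hdown _ x.2)
    subst hx
    rw [gvec_zero]
    simp only [Do, one, Pi.smul_apply, smul_eq_mul, mul_one]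
    have h2 : ∀ a : Pt rk 1, ((⟨⊥, hbot⟩ : Pt rk 0):α) ⋖ (a:α) :=
      fun a => bot_covers rk r hbot hgrade hdown hD1 a
    rw [Finset.sum_congr rfl (fun a _ => if_pos (h2 a))]
    simp only [one, Finset.sum_const, Finset.card_univ, nsmul_eq_mul, mul_one,
      Pi.smul_apply, smul_eq_mul]
    have := pc_one rk r hbot hgrade hdown hD1
    simpa [pc] using this
  | (m+1) =>
    funext y
    rw [gvec_succ]
    simp only [Do, Uo, one, Pi.add_apply, Pi.smul_apply, smul_eq_mul, mul_one]
    rw [Finset.sum_boole, Finset.sum_boole]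
    have := card_up_dn rk r hgrade hD1 m y
    rw [this]
    push_cast
    ring

include hbot hgrade hdown hD1 hD2 in
lemma EE : ∀ k j, (Do rk k (Uo rk k (xiV rk r k j)) + ((j:ℚ)*(r:ℚ)) • xiV rk r k j = one rk k)
    ∧ (Do rk k (Uo rk k (betaV rk r k j)) + ((j:ℚ)*(r:ℚ)) • betaV rk r k j = gvec rk r k) := by
  have hrq := rq_ne r hr
  intro k
  induction k with
  | zero =>
    intro j
    have hjq := jq_ne r hr j
    constructor
    · rw [xi_zero, Uo_smul, Do_smul, comm0 rk r hbot hgrade hdown hD1]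
      match_scalars <;> ((try field_simp); (try ring))
    · rw [beta_zero, xi_zero, gvec_zero, Uo_smul, Uo_smul, Do_smul, Do_smul,
        comm0 rk r hbot hgrade hdown hD1]
      match_scalars <;> ((try field_simp); (try ring))
  | succ k ih =>
    intro j
    have hjq := jq_ne r hr j
    have ihx := (ih (j+1)).1
    have ihb := (ih (j+1)).2
    have hcast : ((j+1 : ℕ):ℚ) = (j:ℚ)+1 := by push_cast; ring
    rw [hcast] at ihx ihb
    have hDUone : Do rk (k+1) (Uo rk (k+1) (one rk (k+1)))
        = Uo rk k (gvec rk r k) + (r:ℚ) • one rk (k+1) := by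
      rw [comm rk r hgrade hD1 hD2 k, down_one rk r hr hbot hgrade hdown hD1]
    have hDkUkB : Do rk k (Uo rk k (betaV rk r k (j+1)))
        = gvec rk r k - (((j:ℚ)+1)*(r:ℚ)) • betaV rk r k (j+1) := by
      rw [← ihb]; abel
    have hDUUB : Do rk (k+1) (Uo rk (k+1) (Uo rk k (betaV rk r k (j+1))))
        = Uo rk k (gvec rk r k) - (((j:ℚ)+1)*(r:ℚ)) • Uo rk k (betaV rk r k (j+1))
          + (r:ℚ) • Uo rk k (betaV rk r k (j+1)) := by
      rw [comm rk r hgrade hD1 hD2 k, hDkUkB, Uo_sub, Uo_smul]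
    have hDkUkX : Do rk k (Uo rk k (xiV rk r k (j+1)))
        = one rk k - (((j:ℚ)+1)*(r:ℚ)) • xiV rk r k (j+1) := by
      rw [← ihx]; abel
    have hDUUX : Do rk (k+1) (Uo rk (k+1) (Uo rk k (xiV rk r k (j+1))))
        = Uo rk k (one rk k) - (((j:ℚ)+1)*(r:ℚ)) • Uo rk k (xiV rk r k (j+1))
          + (r:ℚ) • Uo rk k (xiV rk r k (j+1)) := by
      rw [comm rk r hgrade hD1 hD2 k, hDkUkX, Uo_sub, Uo_smul]
    have hxmain : Do rk (k+1) (Uo rk (k+1) (xiV rk r (k+1) j))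
          + ((j:ℚ)*(r:ℚ)) • xiV rk r (k+1) j = one rk (k+1) := by
      rw [xi_succ, Uo_smul, Do_smul, Uo_sub, Do_sub, hDUone, hDUUB]
      match_scalars <;> ((try field_simp); (try ring))
    refine ⟨hxmain, ?_⟩
    have hxi' : Do rk (k+1) (Uo rk (k+1) (xiV rk r (k+1) j))
        = one rk (k+1) - ((j:ℚ)*(r:ℚ)) • xiV rk r (k+1) j := by
      rw [← hxmain]; abel
    rw [beta_succ, Uo_add, Do_add, hDUUX, Uo_smul, Do_smul, hxi', gvec_succ]
    match_scalars <;> ((try field_simp); (try ring))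

end Identities



noncomputable def Xs (k j : ℕ) : ℚ := inn rk k (xiV rk r k j) (one rk k)
noncomputable def Ys (k j : ℕ) : ℚ := inn rk k (betaV rk r k j) (one rk k)
noncomputable def Zs (k j : ℕ) : ℚ := inn rk k (betaV rk r k j) (gvec rk r k)

lemma inn_sub_right (k : ℕ) (f g h : V rk k) :
    inn rk k f (g - h) = inn rk k f g - inn rk k f h := by
  rw [inn_symm, inn_sub_left, inn_symm rk k g f, inn_symm rk k h f]

lemma Uo_zero (k : ℕ) : Uo rk k (0 : V rk k) = 0 := by
  funext a
  simp [Uo]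

section Scalars
variable (hr : 1 ≤ r) (hbot : rk (⊥:α) = 0)
  (hgrade : ∀ x y : α, x ⋖ y → rk y = rk x + 1)
  (hdown : ∀ x : α, x ≠ ⊥ → ∃ y : α, y ⋖ x)
  (hD1 : ∀ x : α, {z : α | x ⋖ z}.ncard = {y : α | y ⋖ x}.ncard + r)
  (hD2 : ∀ x y : α, x ≠ y →
      {z : α | z ⋖ x ∧ z ⋖ y}.ncard = {z : α | x ⋖ z ∧ y ⋖ z}.ncard)

include hr hbot hgrade hdown hD1 hD2

lemma Wsym (k j : ℕ) : inn rk k (xiV rk r k j) (gvec rk r k) = Ys rk r k j := by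
  have EEx := (EE rk r hr hbot hgrade hdown hD1 hD2 k j).1
  have EEb := (EE rk r hr hbot hgrade hdown hD1 hD2 k j).2
  have hx : inn rk k (betaV rk r k j) (one rk k)
      = inn rk (k+1) (Uo rk k (xiV rk r k j)) (Uo rk k (betaV rk r k j))
        + ((j:ℚ)*(r:ℚ)) * inn rk k (xiV rk r k j) (betaV rk r k j) := by
    rw [← EEx, inn_add_right, inn_smul_right, ← adj,
      inn_symm rk (k+1) (Uo rk k (betaV rk r k j)) (Uo rk k (xiV rk r k j)),
      inn_symm rk k (betaV rk r k j) (xiV rk r k j)]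
  have hg : inn rk k (xiV rk r k j) (gvec rk r k)
      = inn rk (k+1) (Uo rk k (xiV rk r k j)) (Uo rk k (betaV rk r k j))
        + ((j:ℚ)*(r:ℚ)) * inn rk k (xiV rk r k j) (betaV rk r k j) := by
    rw [← EEb, inn_add_right, inn_smul_right, ← adj]
  unfold Ys
  rw [hg, hx]

lemma RXx (k j : ℕ) :
    (((j:ℚ)+1)*(r:ℚ)) * Xs rk r (k+1) j = pc rk (k+1) - Zs rk r k (j+1) := by
  have hrq := rq_ne r hr
  have hjq := jq_ne r hr j
  have expand : Xs rk r (k+1) j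
      = (((j:ℚ)+1)*(r:ℚ))⁻¹ * (pc rk (k+1) - Zs rk r k (j+1)) := by
    unfold Xs Zs
    rw [xi_succ, inn_smul_left, inn_sub_left, inn_one_one, adj,
      down_one rk r hr hbot hgrade hdown hD1]
  rw [expand]
  field_simp

lemma RYy (k j : ℕ) : Ys rk r (k+1) j = Ys rk r k (j+1) + (r:ℚ) * Xs rk r (k+1) j := by
  unfold Ys Xs
  rw [beta_succ, inn_add_left, inn_smul_left, adj, down_one rk r hr hbot hgrade hdown hD1,
    Wsym rk r hr hbot hgrade hdown hD1 hD2 k (j+1)]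
  rfl

lemma RZz (k j : ℕ) : Zs rk r (k+1) j = pc rk k - (((j:ℚ)+1)*(r:ℚ)) * Xs rk r k (j+1)
    + 2*(r:ℚ)*(Ys rk r k (j+1)) + (r:ℚ)^2 * Xs rk r (k+1) j := by
  have hrq := rq_ne r hr
  have hjq := jq_ne r hr j
  have EEx := (EE rk r hr hbot hgrade hdown hD1 hD2 k (j+1)).1
  have EEb := (EE rk r hr hbot hgrade hdown hD1 hD2 k (j+1)).2
  have hcast : ((j+1 : ℕ):ℚ) = (j:ℚ)+1 := by push_cast; ring
  rw [hcast] at EEx EEb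
  have hDoUoX : Do rk k (Uo rk k (xiV rk r k (j+1)))
      = one rk k - (((j:ℚ)+1)*(r:ℚ)) • xiV rk r k (j+1) := by rw [← EEx]; abel
  have hDoUoB : Do rk k (Uo rk k (betaV rk r k (j+1)))
      = gvec rk r k - (((j:ℚ)+1)*(r:ℚ)) • betaV rk r k (j+1) := by rw [← EEb]; abel
  have hT1 : inn rk (k+1) (Uo rk k (xiV rk r k (j+1))) (Uo rk k (one rk k))
      = pc rk k - (((j:ℚ)+1)*(r:ℚ)) * Xs rk r k (j+1) := by
    rw [inn_symm, adj, hDoUoX, inn_sub_right, inn_smul_right, inn_one_one,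
      inn_symm rk k (one rk k) (xiV rk r k (j+1))]
    rfl
  have hT2 : inn rk (k+1) (Uo rk k (xiV rk r k (j+1))) (one rk (k+1))
      = Ys rk r k (j+1) := by
    rw [adj, down_one rk r hr hbot hgrade hdown hD1,
      Wsym rk r hr hbot hgrade hdown hD1 hD2 k (j+1)]
  have hT3 : inn rk (k+1) (xiV rk r (k+1) j) (Uo rk k (one rk k)) = Ys rk r k (j+1) := by
    rw [xi_succ, inn_smul_left, inn_sub_left,
      inn_symm rk (k+1) (one rk (k+1)) (Uo rk k (one rk k)), adj,
      inn_symm rk (k+1) (Uo rk k (betaV rk r k (j+1))) (Uo rk k (one rk k)), adj,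
      hDoUoB, inn_sub_right, inn_smul_right,
      down_one rk r hr hbot hgrade hdown hD1,
      inn_symm rk k (one rk k) (betaV rk r k (j+1))]
    show (((j:ℚ)+1)*(r:ℚ))⁻¹ * (_ - (_ - _ * Ys rk r k (j+1))) = _
    field_simp
    ring
  have hT4 : inn rk (k+1) (xiV rk r (k+1) j) (one rk (k+1)) = Xs rk r (k+1) j := rfl
  unfold Zs
  rw [beta_succ, gvec_succ]
  simp only [inn_add_left, inn_add_right, inn_smul_left, inn_smul_right]
  rw [hT1, hT2, hT3, hT4]
  ring

omit hD2 in
lemma Xs_base (j : ℕ) : Xs rk r 0 j = (((j:ℚ)+1)*(r:ℚ))⁻¹ := by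
  unfold Xs
  rw [xi_zero, inn_smul_left, inn_one_one, pc_zero rk hbot hgrade hdown, mul_one]

omit hD2 in
lemma Ys_base (j : ℕ) : Ys rk r 0 j = (r:ℚ) * (((j:ℚ)+1)*(r:ℚ))⁻¹ := by
  unfold Ys
  rw [beta_zero, inn_smul_left]
  have := Xs_base rk r hr hbot hgrade hdown hD1 j
  unfold Xs at this
  rw [this]

lemma Xs_nonneg (k j : ℕ) : 0 ≤ Xs rk r k j := by
  have EEx := (EE rk r hr hbot hgrade hdown hD1 hD2 k j).1
  have expand : Xs rk r k j
      = inn rk (k+1) (Uo rk k (xiV rk r k j)) (Uo rk k (xiV rk r k j))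
        + ((j:ℚ)*(r:ℚ)) * inn rk k (xiV rk r k j) (xiV rk r k j) := by
    unfold Xs
    rw [inn_symm, ← EEx, inn_add_left, inn_smul_left, inn_symm rk k (Do rk k _), ← adj]
  rw [expand]
  have h1 := inn_self_nonneg rk (k+1) (Uo rk k (xiV rk r k j))
  have h2 := inn_self_nonneg rk k (xiV rk r k j)
  have h3 : 0 ≤ ((j:ℚ)*(r:ℚ)) := by positivity
  nlinarith

lemma Xs_pos (k j : ℕ) (hj : 1 ≤ j) : 0 < Xs rk r k j := by
  have EEx := (EE rk r hr hbot hgrade hdown hD1 hD2 k j).1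
  have expand : Xs rk r k j
      = inn rk (k+1) (Uo rk k (xiV rk r k j)) (Uo rk k (xiV rk r k j))
        + ((j:ℚ)*(r:ℚ)) * inn rk k (xiV rk r k j) (xiV rk r k j) := by
    unfold Xs
    rw [inn_symm, ← EEx, inn_add_left, inn_smul_left, inn_symm rk k (Do rk k _), ← adj]
  have h1 := inn_self_nonneg rk (k+1) (Uo rk k (xiV rk r k j))
  have h2 := inn_self_nonneg rk k (xiV rk r k j)
  have hjr : (1:ℚ) ≤ ((j:ℚ)*(r:ℚ)) := by
    have a1 : (1:ℚ) ≤ (j:ℚ) := by exact_mod_cast hj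
    have a2 : (1:ℚ) ≤ (r:ℚ) := by exact_mod_cast hr
    nlinarith
  rcases lt_or_eq_of_le h2 with hpos | hzero
  · rw [expand]; nlinarith
  · exfalso
    have hxz : xiV rk r k j = 0 := by
      have hz : ∑ x : Pt rk k, (xiV rk r k j) x * (xiV rk r k j) x = 0 := hzero.symm
      funext x
      have hx := (Finset.sum_eq_zero_iff_of_nonneg
        (fun x _ => mul_self_nonneg ((xiV rk r k j) x))).mp hz x (Finset.mem_univ x)
      exact mul_self_eq_zero.mp hx
    have hone : one rk k = 0 := by
      rw [← EEx, hxz, Uo_zero]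
      funext x
      simp [Do]
    obtain ⟨x0⟩ := pt_nonempty rk r hr hbot hgrade hdown hD1 k
    have : (1:ℚ) = 0 := congrFun hone x0
    norm_num at this

lemma csb (k : ℕ) : Zs rk r k 0 ^ 2 ≤ pc rk (k+1) * Zs rk r k 0 := by
  have EEb := (EE rk r hr hbot hgrade hdown hD1 hD2 k 0).2
  have hDoUoB : Do rk k (Uo rk k (betaV rk r k 0)) = gvec rk r k := by
    rw [← EEb]
    push_cast
    rw [zero_mul, zero_smul, add_zero]
  set t : V rk (k+1) := Uo rk k (betaV rk r k 0) with ht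
  have hA : inn rk (k+1) t (one rk (k+1)) = Zs rk r k 0 := by
    rw [ht, adj, down_one rk r hr hbot hgrade hdown hD1]; rfl
  have hB : inn rk (k+1) t t = Zs rk r k 0 := by
    rw [ht, adj, hDoUoB]; rfl
  have hCS : (∑ a : Pt rk (k+1), t a * 1) ^ 2
      ≤ (∑ a : Pt rk (k+1), (t a)^2) * (∑ a : Pt rk (k+1), (1:ℚ)^2) := by
    exact Finset.sum_mul_sq_le_sq_mul_sq Finset.univ t (fun _ => 1)
  have e1 : (∑ a : Pt rk (k+1), t a * 1) = Zs rk r k 0 := by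
    rw [← hA]; rfl
  have e2 : (∑ a : Pt rk (k+1), (t a)^2) = Zs rk r k 0 := by
    rw [← hB]; unfold inn; exact Finset.sum_congr rfl (fun a _ => by ring)
  have e3 : (∑ a : Pt rk (k+1), (1:ℚ)^2) = pc rk (k+1) := by
    simp [pc]
  rw [e1, e2, e3] at hCS
  linarith [hCS]

lemma main_identity (k : ℕ) :
    Zs rk r (k+2) 0 - pc rk (k+2)
      = (pc rk (k+1) - pc rk k) + 2*(r:ℚ)*Xs rk r k 2
        + (r:ℚ)*((r:ℚ)-1)*(Xs rk r (k+1) 1 + Xs rk r (k+2) 0) := by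
  have h1 := RZz rk r hr hbot hgrade hdown hD1 hD2 (k+1) 0
  have h2 := RYy rk r hr hbot hgrade hdown hD1 hD2 k 1
  have h3 := RZz rk r hr hbot hgrade hdown hD1 hD2 k 1
  have h4 := RXx rk r hr hbot hgrade hdown hD1 hD2 (k+1) 0
  push_cast at h1 h2 h3 h4
  linear_combination h1 + 2*(r:ℚ)*h2 - h3 + h4

lemma base1 : pc rk 1 < Zs rk r 1 0 := by
  have hrq := rq_ne r hr
  have h1 := RZz rk r hr hbot hgrade hdown hD1 hD2 0 0
  have hx := Xs_base rk r hr hbot hgrade hdown hD1 1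
  have hy := Ys_base rk r hr hbot hgrade hdown hD1 1
  have hp0 := pc_zero rk hbot hgrade hdown
  have hp1 := pc_one rk r hbot hgrade hdown hD1
  have hXnn := Xs_nonneg rk r hr hbot hgrade hdown hD1 hD2 1 0
  push_cast at h1 hx hy
  rw [hx, hy, hp0] at h1
  have hsimp : Zs rk r 1 0 = 1 - 1/2 + (r:ℚ) + (r:ℚ)^2 * Xs rk r 1 0 := by
    rw [h1]
    field_simp
    ring
  have hr2 : (0:ℚ) ≤ (r:ℚ)^2 * Xs rk r 1 0 := by positivity
  rw [hp1, hsimp]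
  linarith

omit hr hbot hgrade hdown hD1 hD2 in
lemma pc_nonneg (k : ℕ) : 0 ≤ pc rk k := by
  unfold pc; positivity

lemma main_ind : ∀ k, pc rk (k+1) < Zs rk r (k+1) 0 ∧ pc rk k ≤ pc rk (k+1) := by
  intro k
  induction k with
  | zero =>
    refine ⟨base1 rk r hr hbot hgrade hdown hD1 hD2, ?_⟩
    rw [pc_zero rk hbot hgrade hdown, pc_one rk r hbot hgrade hdown hD1]
    exact_mod_cast hr
  | succ k ih =>
    have hZpos : 0 < Zs rk r (k+1) 0 :=
      lt_of_le_of_lt (pc_nonneg rk (k+1)) ih.1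
    have hcs := csb rk r hr hbot hgrade hdown hD1 hD2 (k+1)
    have hpc2 : Zs rk r (k+1) 0 ≤ pc rk (k+2) := by
      nlinarith
    have hmono : pc rk (k+1) ≤ pc rk (k+2) := le_trans (le_of_lt ih.1) hpc2
    refine ⟨?_, hmono⟩
    have hid := main_identity rk r hr hbot hgrade hdown hD1 hD2 k
    have hX2 := Xs_pos rk r hr hbot hgrade hdown hD1 hD2 k 2 (by norm_num)
    have hX1 := Xs_nonneg rk r hr hbot hgrade hdown hD1 hD2 (k+1) 1
    have hX0 := Xs_nonneg rk r hr hbot hgrade hdown hD1 hD2 (k+2) 0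
    have hr1 : (1:ℚ) ≤ (r:ℚ) := by exact_mod_cast hr
    have hmono1 := ih.2
    have hrpos : (0:ℚ) < (r:ℚ) := by linarith
    have t1 : 0 < 2*(r:ℚ)*Xs rk r k 2 := by positivity
    have t2 : 0 ≤ (r:ℚ)*((r:ℚ)-1)*(Xs rk r (k+1) 1 + Xs rk r (k+2) 0) :=
      mul_nonneg (mul_nonneg (le_of_lt hrpos) (by linarith)) (add_nonneg hX1 hX0)
    linarith

end Scalars


end StanleyMiller

variable {α : Type*}

/-- **Stanley's conjecture.** The rank sizes of an `r`-differential poset strictly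
increase from rank 1 onward: `p_1 < p_2 < p_3 < ⋯`. -/
theorem rank_sizes_strictly_increase [PartialOrder α] [OrderBot α]
    (rk : α → ℕ) (r : ℕ) [∀ n : ℕ, Fintype {x : α // rk x = n}]
    (hr : 1 ≤ r) (hbot : rk ⊥ = 0)
    (hgrade : ∀ x y : α, x ⋖ y → rk y = rk x + 1)
    (hdown : ∀ x : α, x ≠ ⊥ → ∃ y : α, y ⋖ x)
    (hD1 : ∀ x : α, {z : α | x ⋖ z}.ncard = {y : α | y ⋖ x}.ncard + r)
    (hD2 : ∀ x y : α, x ≠ y →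
      {z : α | z ⋖ x ∧ z ⋖ y}.ncard = {z : α | x ⋖ z ∧ y ⋖ z}.ncard)
    (n : ℕ) (hn : 1 ≤ n) :
    Fintype.card {x : α // rk x = n} < Fintype.card {x : α // rk x = n + 1} := by
  obtain ⟨m, rfl⟩ : ∃ m, n = m + 1 := ⟨n - 1, by omega⟩
  have H := StanleyMiller.main_ind rk r hr hbot hgrade hdown hD1 hD2 m
  have hZpos : 0 < StanleyMiller.Zs rk r (m+1) 0 :=
    lt_of_le_of_lt (StanleyMiller.pc_nonneg rk (m+1)) H.1
  have hcs := StanleyMiller.csb rk r hr hbot hgrade hdown hD1 hD2 (m+1)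
  have hle : StanleyMiller.Zs rk r (m+1) 0 ≤ StanleyMiller.pc rk (m+2) := by
    nlinarith
  have hfin : StanleyMiller.pc rk (m+1) < StanleyMiller.pc rk (m+1+1) :=
    lt_of_lt_of_le H.1 hle
  unfold StanleyMiller.pc at hfin
  exact_mod_cast hfin
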